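/- For every natural number n ≥ 0, let R_n be the double-tailed diamond poset on the set {0, 1, ..., 2n+3} in which i ≤ j exactly when i ≤ j as integers and {i, j} ≠ {n+1, n+2}; that is, R_n consists of a chain 0 < 1 < ... < n, two incomparable elements n+1 and n+2 both above n and both below n+3, and a chain n+3 < ... < 2n+3. Then the Wiener index of R_n satisfies 3 · d(R_n) = 2 (n + 3)(4n² + 9n + 8), i.e., d(R_n) = (2/3)(n+3)(4n² + 9n + 8). -/

import Mathlib

/-- The Hasse diagram graph of a preorder: vertices are the elements, with an
edge between two elements exactly when one covers the other. -/
def hasseGraph (α : Type*) [Preorder α] : SimpleGraph α where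
  Adj a b := a ⋖ b ∨ b ⋖ a
  symm := ⟨fun _ _ h => h.symm⟩
  loopless := ⟨fun _ h => h.elim (fun h' => h'.lt.ne rfl) (fun h' => h'.lt.ne rfl)⟩

/-- The Wiener index of a poset: the sum over all ordered pairs of elements
of the graph distance in the Hasse diagram graph. -/
noncomputable def wienerIndex (α : Type*) [Preorder α] : ℕ :=
  ∑ᶠ p : α, ∑ᶠ q : α, (hasseGraph α).dist p q
open Finset

private def Lv (n i : ℕ) : ℕ := if i ≤ n + 1 then i else i - 1

private lemma gauss (m : ℕ) : 2 * ∑ b ∈ range m, (m - b) = m * (m + 1) := by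
  induction m with
  | zero => simp
  | succ m ih =>
    rw [sum_range_succ]
    have hc : ∀ b ∈ range m, m + 1 - b = (m - b) + 1 := by
      intro b hb; simp at hb; omega
    rw [sum_congr rfl hc, sum_add_distrib, sum_const, card_range]
    have e1 : m + 1 - m = 1 := by omega
    rw [e1]
    simp only [smul_eq_mul, mul_one]
    nlinarith [ih]

private lemma sum_dist_row (c : ℕ) : ∀ m, c ≤ m →
    2 * ∑ b ∈ range m, Nat.dist c b = c * (c + 1) + (m - 1 - c) * (m - c) := by
  intro m
  induction m with
  | zero => intro h; simp_all
  | succ m ih =>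
    intro h
    rcases Nat.lt_or_ge c (m + 1) with h' | h'
    · have hc : c ≤ m := by omega
      rw [sum_range_succ, Nat.mul_add, ih hc, Nat.dist_eq_sub_of_le hc]
      obtain ⟨k, rfl⟩ := Nat.exists_eq_add_of_le hc
      have e1 : c + k - 1 - c = k - 1 := by omega
      have e2 : c + k - c = k := by omega
      have e3 : c + k + 1 - 1 - c = k := by omega
      have e4 : c + k + 1 - c = k + 1 := by omega
      rw [e1, e2, e3, e4]
      cases k with
      | zero => simp
      | succ j => simp [Nat.succ_sub_one]; ring
    · have hc : c = m + 1 := by omega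
      subst hc
      have hcong : ∀ b ∈ range (m+1), Nat.dist (m+1) b = (m+1) - b := by
        intro b hb; exact Nat.dist_eq_sub_of_le_right (by simp at hb; omega)
      rw [sum_congr rfl hcong, gauss]
      simp

private lemma sum_dist_all : ∀ m, 3 * ∑ a ∈ range m, ∑ b ∈ range m, Nat.dist a b
    = (m - 1) * m * (m + 1) := by
  intro m
  induction m with
  | zero => simp
  | succ m ih =>
    rw [sum_range_succ]
    have hc : ∀ a ∈ range m, ∑ b ∈ range (m+1), Nat.dist a b
        = (∑ b ∈ range m, Nat.dist a b) + Nat.dist a m := by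
      intro a _; rw [sum_range_succ]
    rw [sum_congr rfl hc, sum_add_distrib, sum_range_succ, Nat.dist_self]
    have h1 : ∀ a ∈ range m, Nat.dist a m = Nat.dist m a := by
      intro a _; exact Nat.dist_comm a m
    rw [sum_congr rfl h1]
    have h2 := sum_dist_row m m le_rfl
    have e0 : m - 1 - m = 0 := by omega
    rw [e0] at h2
    simp only [Nat.zero_mul, Nat.add_zero] at h2
    cases m with
    | zero => simp
    | succ j =>
      simp only [Nat.succ_sub_one] at ih ⊢
      nlinarith [ih, h2]

private lemma sum_Lv (n : ℕ) (h : ℕ → ℕ) :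
    ∑ i ∈ range (2 * n + 4), h (Lv n i) = (∑ a ∈ range (2 * n + 3), h a) + h (n + 1) := by
  have e1 : 2 * n + 4 = (n + 2) + (n + 2) := by omega
  have e2 : 2 * n + 3 = (n + 1) + (n + 2) := by omega
  rw [e1, e2, sum_range_add (fun i => h (Lv n i)) (n + 2) (n + 2), sum_range_add h (n + 1) (n + 2)]
  have c1 : ∀ i ∈ range (n + 2), h (Lv n i) = h i := by
    intro i hi; simp at hi
    have : Lv n i = i := by unfold Lv; split_ifs <;> omega
    rw [this]
  have c2 : ∀ i ∈ range (n + 2), h (Lv n (n + 2 + i)) = h (n + 1 + i) := by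
    intro i hi
    have : Lv n (n + 2 + i) = n + 1 + i := by unfold Lv; split_ifs <;> omega
    rw [this]
  rw [sum_congr rfl c1, sum_congr rfl c2, sum_range_succ]
  omega

section Graph

variable {n : ℕ} {P : Type*} [PartialOrder P] (e : P ≃ Fin (2 * n + 4))
    (he : ∀ a b : P, a ≤ b ↔
      ((e a : ℕ) ≤ (e b : ℕ) ∧ ¬((e a : ℕ) = n + 1 ∧ (e b : ℕ) = n + 2)))

include he

private lemma lt_char (a b : P) : a < b ↔
    ((e a : ℕ) < (e b : ℕ) ∧ ¬((e a : ℕ) = n + 1 ∧ (e b : ℕ) = n + 2)) := by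
  rw [lt_iff_le_not_ge, he, he]
  constructor
  · rintro ⟨⟨h1, h2⟩, h3⟩
    refine ⟨?_, h2⟩
    rcases Nat.lt_or_ge (e a : ℕ) (e b : ℕ) with h | h
    · exact h
    · exfalso; exact h3 ⟨h, by omega⟩
  · rintro ⟨h1, h2⟩
    exact ⟨⟨h1.le, h2⟩, fun hc => absurd hc.1 (by omega)⟩

/-- cover relation in terms of labels -/
private def CovD (n x y : ℕ) : Prop :=
  (y = x + 1 ∧ ¬(x = n + 1 ∧ y = n + 2)) ∨ (x = n ∧ y = n + 2) ∨ (x = n + 1 ∧ y = n + 3)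

private lemma cov_char (p q : P) : p ⋖ q ↔ CovD n (e p : ℕ) (e q : ℕ) := by
  constructor
  · rintro ⟨hlt, hmid⟩
    rw [lt_char e he] at hlt
    obtain ⟨h1, h2⟩ := hlt
    by_contra hC
    unfold CovD at hC
    have hqlt := (e q).isLt
    obtain ⟨k, hkN, ⟨hpk1, hpk2⟩, hkq1, hkq2⟩ : ∃ k, k < 2 * n + 4 ∧
        ((e p : ℕ) < k ∧ ¬((e p : ℕ) = n + 1 ∧ k = n + 2)) ∧
        (k < (e q : ℕ) ∧ ¬(k = n + 1 ∧ (e q : ℕ) = n + 2)) := by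
      refine ⟨if (e p : ℕ) = n + 1 then n + 3 else (e p : ℕ) + 1, ?_⟩
      split_ifs <;> omega
    set c : P := e.symm ⟨k, hkN⟩ with hc
    have hck : (e c : ℕ) = k := by simp [hc]
    exact hmid ((lt_char e he p c).mpr (by rw [hck]; exact ⟨hpk1, hpk2⟩))
      ((lt_char e he c q).mpr (by rw [hck]; exact ⟨hkq1, hkq2⟩))
  · rintro hC
    constructor
    · rw [lt_char e he]; unfold CovD at hC; omega
    · intro c h1 h2
      rw [lt_char e he] at h1 h2
      unfold CovD at hC
      omega

private lemma adj_char (p q : P) :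
    (hasseGraph P).Adj p q ↔ CovD n (e p : ℕ) (e q : ℕ) ∨ CovD n (e q : ℕ) (e p : ℕ) := by
  show (p ⋖ q ∨ q ⋖ p) ↔ _
  rw [cov_char e he, cov_char e he]

omit he in
private lemma covD_lv {x y : ℕ} (h : CovD n x y) : Lv n y = Lv n x + 1 := by
  unfold CovD at h; unfold Lv; split_ifs <;> omega

private lemma walk_lb {p q : P} (w : (hasseGraph P).Walk p q) :
    Nat.dist (Lv n (e p : ℕ)) (Lv n (e q : ℕ)) ≤ w.length := by
  induction w with
  | nil => simp [Nat.dist_self]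
  | @cons u v r hadj w ih =>
    rw [SimpleGraph.Walk.length_cons]
    have hstep : Nat.dist (Lv n (e u : ℕ)) (Lv n (e v : ℕ)) ≤ 1 := by
      rcases (adj_char e he u v).mp hadj with h | h
      · rw [covD_lv h]; simp [Nat.dist]
      · rw [covD_lv h]; simp [Nat.dist]
    calc Nat.dist (Lv n (e u : ℕ)) (Lv n (e r : ℕ))
        ≤ Nat.dist (Lv n (e u : ℕ)) (Lv n (e v : ℕ))
          + Nat.dist (Lv n (e v : ℕ)) (Lv n (e r : ℕ)) := Nat.dist.triangle_inequality _ _ _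
      _ ≤ 1 + w.length := Nat.add_le_add hstep ih
      _ = w.length + 1 := Nat.add_comm _ _

private lemma walk_ub : ∀ (d : ℕ) (p q : P), (e p : ℕ) ≤ (e q : ℕ) →
    ¬((e p : ℕ) = n + 1 ∧ (e q : ℕ) = n + 2) →
    Lv n (e q : ℕ) - Lv n (e p : ℕ) ≤ d →
    ∃ w : (hasseGraph P).Walk p q, w.length = Lv n (e q : ℕ) - Lv n (e p : ℕ) := by
  intro d
  induction d with
  | zero =>
    intro p q h1 h2 h3
    have hpq : p = q := e.injective (Fin.ext (by unfold Lv at h3; split_ifs at h3 <;> omega))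
    subst hpq
    exact ⟨SimpleGraph.Walk.nil, by simp⟩
  | succ d ih =>
    intro p q h1 h2 h3
    rcases Nat.eq_or_lt_of_le h1 with h | h
    · have hpq : p = q := e.injective (Fin.ext h)
      subst hpq
      exact ⟨SimpleGraph.Walk.nil, by simp⟩
    · have hq := (e q).isLt
      obtain ⟨k, hkN, hcov, hkq, hksp⟩ : ∃ k, k < 2 * n + 4 ∧ CovD n (e p : ℕ) k ∧
          k ≤ (e q : ℕ) ∧ ¬(k = n + 1 ∧ (e q : ℕ) = n + 2) := by
        refine ⟨if (e p : ℕ) = n + 1 then n + 3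
          else if (e p : ℕ) = n ∧ (e q : ℕ) = n + 2 then n + 2 else (e p : ℕ) + 1, ?_⟩
        unfold CovD
        split_ifs <;> omega
      set r : P := e.symm ⟨k, hkN⟩ with hrdef
      have hrk : (e r : ℕ) = k := by simp [hrdef]
      have hLv : Lv n k = Lv n (e p : ℕ) + 1 := covD_lv hcov
      have hlt : Lv n (e p : ℕ) < Lv n (e q : ℕ) := by
        unfold Lv; split_ifs <;> omega
      obtain ⟨w, hw⟩ := ih r q (by omega) (by rw [hrk]; exact hksp) (by rw [hrk]; omega)
      have hadj : (hasseGraph P).Adj p r :=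
        (adj_char e he p r).mpr (Or.inl (by rw [hrk]; exact hcov))
      refine ⟨SimpleGraph.Walk.cons hadj w, ?_⟩
      rw [SimpleGraph.Walk.length_cons, hw, hrk]
      omega

private lemma dist_eq_of_le {p q : P} (hle : (e p : ℕ) ≤ (e q : ℕ)) :
    (hasseGraph P).dist p q = Nat.dist (Lv n (e p : ℕ)) (Lv n (e q : ℕ)) +
      ((if (e p : ℕ) = n + 1 ∧ (e q : ℕ) = n + 2 then 2 else 0) +
       (if (e p : ℕ) = n + 2 ∧ (e q : ℕ) = n + 1 then 2 else 0)) := by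
  by_cases hsp : (e p : ℕ) = n + 1 ∧ (e q : ℕ) = n + 2
  · obtain ⟨hp1, hq1⟩ := hsp
    have hnN : n < 2 * n + 4 := by omega
    set r : P := e.symm ⟨n, hnN⟩ with hrdef
    have hrn : (e r : ℕ) = n := by simp [hrdef]
    have a1 : (hasseGraph P).Adj p r :=
      (adj_char e he p r).mpr (Or.inr (by unfold CovD; omega))
    have a2 : (hasseGraph P).Adj r q :=
      (adj_char e he r q).mpr (Or.inl (by unfold CovD; omega))
    have hub : (hasseGraph P).dist p q ≤ 2 := by
      have := SimpleGraph.dist_le (SimpleGraph.Walk.cons a1 (SimpleGraph.Walk.cons a2 SimpleGraph.Walk.nil))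
      simpa using this
    have hne : p ≠ q := fun hpq => by rw [hpq] at hp1; omega
    have h0 : (hasseGraph P).dist p q ≠ 0 := by
      rw [SimpleGraph.dist_ne_zero_iff_ne_and_reachable]
      exact ⟨hne, ⟨SimpleGraph.Walk.cons a1 (SimpleGraph.Walk.cons a2 SimpleGraph.Walk.nil)⟩⟩
    have h1' : (hasseGraph P).dist p q ≠ 1 := fun hd => by
      rcases (adj_char e he p q).mp (SimpleGraph.dist_eq_one_iff_adj.mp hd) with h | h <;>
        (unfold CovD at h; omega)
    have hLveq : Lv n (e p : ℕ) = Lv n (e q : ℕ) := by unfold Lv; split_ifs <;> omega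
    rw [Nat.dist_eq_zero hLveq, if_pos ⟨hp1, hq1⟩, if_neg (by omega)]
    omega
  · obtain ⟨w, hw⟩ := walk_ub e he _ p q hle hsp le_rfl
    have hub := SimpleGraph.dist_le w
    obtain ⟨w', hw'⟩ :=
      SimpleGraph.Reachable.exists_walk_length_eq_dist (⟨w⟩ : (hasseGraph P).Reachable p q)
    have hlb := walk_lb e he w'
    rw [hw'] at hlb
    have hmono : Lv n (e p : ℕ) ≤ Lv n (e q : ℕ) := by unfold Lv; split_ifs <;> omega
    rw [Nat.dist_eq_sub_of_le hmono] at hlb ⊢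
    rw [if_neg hsp, if_neg (by omega)]
    omega

private lemma dist_eq (p q : P) :
    (hasseGraph P).dist p q = Nat.dist (Lv n (e p : ℕ)) (Lv n (e q : ℕ)) +
      ((if (e p : ℕ) = n + 1 ∧ (e q : ℕ) = n + 2 then 2 else 0) +
       (if (e p : ℕ) = n + 2 ∧ (e q : ℕ) = n + 1 then 2 else 0)) := by
  rcases le_total ((e p : ℕ)) ((e q : ℕ)) with h | h
  · exact dist_eq_of_le e he h
  · rw [SimpleGraph.dist_comm, dist_eq_of_le e he h, Nat.dist_comm]
    split_ifs <;> omega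

end Graph


private def DD (n i j : ℕ) : ℕ := Nat.dist (Lv n i) (Lv n j) +
    ((if i = n + 1 ∧ j = n + 2 then 2 else 0) +
     (if i = n + 2 ∧ j = n + 1 then 2 else 0))


/-- Wiener index of the double-tailed diamond poset $R_n$: a poset on
$\{0, …, 2n+3\}$ in which $i ≤ j$ exactly when $i ≤ j$ as integers and
$\{i,j\} ≠ \{n+1, n+2\}$. -/
theorem wiener_doubleTailedDiamond (n : ℕ) (P : Type*) [PartialOrder P]
    (e : P ≃ Fin (2 * n + 4))
    (he : ∀ a b : P, a ≤ b ↔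
      ((e a : ℕ) ≤ (e b : ℕ) ∧ ¬((e a : ℕ) = n + 1 ∧ (e b : ℕ) = n + 2))) :
    3 * wienerIndex P = 2 * (n + 3) * (4 * n ^ 2 + 9 * n + 8) := by
  haveI : Fintype P := Fintype.ofEquiv _ e.symm
  have hW : wienerIndex P = ∑ i ∈ range (2 * n + 4), ∑ j ∈ range (2 * n + 4), DD n i j := by
    unfold wienerIndex
    rw [finsum_eq_sum_of_fintype]
    have step1 : ∀ p : P, ∑ᶠ q : P, (hasseGraph P).dist p q
        = ∑ q : P, (hasseGraph P).dist p q := fun p => finsum_eq_sum_of_fintype _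
    rw [Finset.sum_congr rfl fun p _ => step1 p]
    rw [← Equiv.sum_comp e.symm (fun p => ∑ q : P, (hasseGraph P).dist p q)]
    rw [← Fin.sum_univ_eq_sum_range (fun i => ∑ j ∈ range (2 * n + 4), DD n i j) (2 * n + 4)]
    refine Finset.sum_congr rfl fun i _ => ?_
    rw [← Equiv.sum_comp e.symm (fun q => (hasseGraph P).dist (e.symm i) q)]
    rw [← Fin.sum_univ_eq_sum_range (fun j => DD n i j) (2 * n + 4)]
    refine Finset.sum_congr rfl fun j _ => ?_
    rw [dist_eq e he]
    unfold DD
    simp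
  have hsplit : ∀ i ∈ range (2 * n + 4), ∑ j ∈ range (2 * n + 4), DD n i j
      = (∑ j ∈ range (2 * n + 4), Nat.dist (Lv n i) (Lv n j))
        + ((∑ j ∈ range (2 * n + 4), if i = n + 1 ∧ j = n + 2 then 2 else 0)
         + (∑ j ∈ range (2 * n + 4), if i = n + 2 ∧ j = n + 1 then 2 else 0)) := by
    intro i _
    unfold DD
    rw [Finset.sum_add_distrib, Finset.sum_add_distrib]
  rw [Finset.sum_congr rfl hsplit, Finset.sum_add_distrib, Finset.sum_add_distrib] at hW
  -- the two correction sums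
  have hcor1 : ∑ i ∈ range (2 * n + 4), ∑ j ∈ range (2 * n + 4), (if i = n + 1 ∧ j = n + 2 then 2 else 0) = 2 := by
    have hin : ∀ i ∈ range (2 * n + 4), (∑ j ∈ range (2 * n + 4), if i = n + 1 ∧ j = n + 2 then 2 else 0)
        = if i = n + 1 then 2 else 0 := by
      intro i _
      by_cases hi : i = n + 1
      · simp only [hi, true_and, Finset.sum_ite_eq' (range (2 * n + 4)) (n + 2) (fun _ => 2),
          Finset.mem_range, if_pos]
        rw [if_pos (by omega)]
      · simp [hi]
    rw [Finset.sum_congr rfl hin, Finset.sum_ite_eq' (range (2 * n + 4)) (n + 1) (fun _ => 2)]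
    rw [if_pos (by simp; omega)]
  have hcor2 : ∑ i ∈ range (2 * n + 4), ∑ j ∈ range (2 * n + 4), (if i = n + 2 ∧ j = n + 1 then 2 else 0) = 2 := by
    have hin : ∀ i ∈ range (2 * n + 4), (∑ j ∈ range (2 * n + 4), if i = n + 2 ∧ j = n + 1 then 2 else 0)
        = if i = n + 2 then 2 else 0 := by
      intro i _
      by_cases hi : i = n + 2
      · simp only [hi, true_and, Finset.sum_ite_eq' (range (2 * n + 4)) (n + 1) (fun _ => 2),
          Finset.mem_range, if_pos]
        rw [if_pos (by omega)]
      · simp [hi]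
    rw [Finset.sum_congr rfl hin, Finset.sum_ite_eq' (range (2 * n + 4)) (n + 2) (fun _ => 2)]
    rw [if_pos (by simp; omega)]
  -- the main distance sum
  set T := ∑ a ∈ range (2 * n + 3), ∑ b ∈ range (2 * n + 3), Nat.dist a b with hT
  set A := ∑ b ∈ range (2 * n + 3), Nat.dist (n + 1) b with hA
  have hmain : ∑ i ∈ range (2 * n + 4), ∑ j ∈ range (2 * n + 4), Nat.dist (Lv n i) (Lv n j) = T + 2 * A := by
    have hinner : ∀ i ∈ range (2 * n + 4), ∑ j ∈ range (2 * n + 4), Nat.dist (Lv n i) (Lv n j)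
        = (∑ b ∈ range (2 * n + 3), Nat.dist (Lv n i) b) + Nat.dist (Lv n i) (n + 1) :=
      fun i _ => sum_Lv n (fun b => Nat.dist (Lv n i) b)
    rw [Finset.sum_congr rfl hinner,
      sum_Lv n (fun a => (∑ b ∈ range (2 * n + 3), Nat.dist a b) + Nat.dist a (n + 1))]
    have hAA : ∑ a ∈ range (2 * n + 3), Nat.dist a (n + 1) = A := by
      rw [hA]
      exact Finset.sum_congr rfl fun a _ => Nat.dist_comm a (n + 1)
    rw [Finset.sum_add_distrib, hAA, Nat.dist_self]
    omega
  have h3T : 3 * T = (2 * n + 2) * (2 * n + 3) * (2 * n + 4) := by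
    have := sum_dist_all (2 * n + 3)
    have e1 : 2 * n + 3 - 1 = 2 * n + 2 := by omega
    rw [e1] at this
    rw [hT]
    exact this
  have h2A : 2 * A = (n + 1) * (n + 2) + (n + 1) * (n + 2) := by
    have := sum_dist_row (n + 1) (2 * n + 3) (by omega)
    have e1 : 2 * n + 3 - 1 - (n + 1) = n + 1 := by omega
    have e2 : 2 * n + 3 - (n + 1) = n + 2 := by omega
    rw [e1, e2] at this
    rw [hA, this]
  rw [hmain, hcor1, hcor2] at hW
  have : 3 * wienerIndex P = 3 * T + 3 * (2 * A) + 12 := by rw [hW]; ring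
  rw [this, h3T, h2A]
  ring
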